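/- For f(x) = 1/(4x), every point of the focal curve c(t) = (1/(1 - f'(t)), (f(t) - t·f'(t))/(1 - f'(t))) with t ≠ 0 satisfies (x - 1/2)² + y² = 1/4, i.e., lies on the circle of radius 1/2 centered at (1/2, 0). -/

import Mathlib

/-- For `f x = 1/(4x)`, every point of the focal curve with `t ≠ 0` lies on
the circle of radius `1/2` centered at `(1/2, 0)`. -/
theorem stmt_2 (f : ℝ → ℝ) (hf : ∀ x, f x = 1 / (4 * x)) (t : ℝ) (ht : t ≠ 0) :
    let x := 1 / (1 - deriv f t)
    let y := (f t - t * deriv f t) / (1 - deriv f t)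
    (x - 1 / 2) ^ 2 + y ^ 2 = 1 / 4 := by
  have hfe : f = fun x => 1 / (4 * x) := funext hf
  have hd : deriv f t = -1 / (4 * t ^ 2) := by
    have h4 : (4 : ℝ) * t ≠ 0 := by positivity
    have h2 := ((hasDerivAt_id t).const_mul (4 : ℝ)).inv h4
    rw [hfe]
    simp only [one_div]
    simp only [id] at h2
    rw [show (fun x : ℝ => (4 * x)⁻¹) = (fun y => 4 * y)⁻¹ from rfl, h2.deriv]
    field_simp
  intro x y
  have h1 : (1 : ℝ) - deriv f t = (4 * t ^ 2 + 1) / (4 * t ^ 2) := by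
    rw [hd]; field_simp; ring
  have hne : (4 : ℝ) * t ^ 2 + 1 ≠ 0 := by positivity
  simp only [x, y, h1]
  simp only [hd, hf]
  field_simp
  ring
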